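/- B₁(1/√2, −1/√2) = 0 and B₂(1/√2, −1/√2) = 0. -/

import Mathlib

open Real Filter Topology

/-- The 2×2 matrix C(α,β) from the paper. -/
noncomputable def Cmat (a b : ℝ) : Matrix (Fin 2) (Fin 2) ℝ :=
  1 + b • !![-a, -1 + a; -1 + a, -a] + (1 - b) • !![-1 + a, -a; -a, -1 + a]

/-- The running costs L₁, L₂. -/
noncomputable def Lfun (i : Fin 2) (a b : ℝ) : ℝ :=
  if i = 0 then a * b + 2 * (1 - a) * (1 - b) else -(a * b) - 2 * (1 - a) * (1 - b)

/-- b_i(α,β,u₁,u₂) = c_{i1}(α,β)u₁ + c_{i2}(α,β)u₂ − L_i(α,β). -/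
noncomputable def bfun (i : Fin 2) (a b u₁ u₂ : ℝ) : ℝ :=
  Cmat a b i 0 * u₁ + Cmat a b i 1 * u₂ - Lfun i a b

/-- A_i(u₁,u₂) = max_{α∈𝒜} min_{β∈ℬ} b_i(α,β,u₁,u₂). -/
noncomputable def Afun (As Bs : Set ℝ) (i : Fin 2) (u₁ u₂ : ℝ) : ℝ :=
  sSup ((fun a => sInf ((fun b => bfun i a b u₁ u₂) '' Bs)) '' As)

/-- The set 𝒜 = {2 − √2 + 4^{−k} : k ≥ 1} ∪ {2 − √2}. -/
noncomputable def calA : Set ℝ :=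
  {x | ∃ k : ℕ, 1 ≤ k ∧ x = 2 - Real.sqrt 2 + (4 : ℝ) ^ (-(k : ℤ))} ∪ {2 - Real.sqrt 2}

/-- The set ℬ = {0, 1}. -/
def calB : Set ℝ := {0, 1}

/-- B_i(u₁,u₂) = max_{α∈𝒜} min_{β∈ℬ} b_i(α,β,u₁,u₂). -/
noncomputable def Bop (i : Fin 2) (u₁ u₂ : ℝ) : ℝ := Afun calA calB i u₁ u₂

lemma bfun0_eval (a b u₁ u₂ : ℝ) :
    bfun 0 a b u₁ u₂ = (1 + b*(-a) + (1-b)*(-1+a)) * u₁ + (b*(-1+a) + (1-b)*(-a)) * u₂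
      - (a*b + 2*(1-a)*(1-b)) := by
  simp [bfun, Cmat, Lfun, Matrix.add_apply, Matrix.smul_apply, Matrix.one_apply,
    Matrix.cons_val_zero, Matrix.cons_val_one, Matrix.head_cons, Matrix.of_apply, Matrix.cons_val']

lemma bfun1_eval (a b u₁ u₂ : ℝ) :
    bfun 1 a b u₁ u₂ = (b*(-1+a) + (1-b)*(-a)) * u₁ + (1 + b*(-a) + (1-b)*(-1+a)) * u₂
      + (a*b + 2*(1-a)*(1-b)) := by
  simp [bfun, Cmat, Lfun, Matrix.add_apply, Matrix.smul_apply, Matrix.one_apply,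
    Matrix.cons_val_zero, Matrix.cons_val_one, Matrix.head_cons, Matrix.of_apply, Matrix.cons_val']
  ring

lemma inf_calB (f : ℝ → ℝ) : sInf (f '' calB) = min (f 0) (f 1) := by
  have h : f '' calB = {f 0, f 1} := by
    simp [calB, Set.image_insert_eq]
  rw [h, csInf_pair]

theorem B_at_special_point :
    Bop 0 (1 / Real.sqrt 2) (-(1 / Real.sqrt 2)) = 0 ∧
    Bop 1 (1 / Real.sqrt 2) (-(1 / Real.sqrt 2)) = 0 := by
  have hs2 : Real.sqrt 2 ^ 2 = 2 := Real.sq_sqrt (by norm_num)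
  have hs0 : (0:ℝ) < Real.sqrt 2 := Real.sqrt_pos.mpr (by norm_num)
  set s := Real.sqrt 2 with hsdef
  have hu : 1 / s = s / 2 := by
    field_simp
    nlinarith [hs2]
  have hmem : (2 - s) ∈ calA := Or.inr rfl
  have hge : ∀ a ∈ calA, 2 - s ≤ a := by
    rintro a (⟨k, hk, rfl⟩ | rfl)
    · have h4 : (0:ℝ) < (4:ℝ) ^ (-(k:ℤ)) := zpow_pos (by norm_num) _
      linarith
    · exact le_refl _
  constructor
  · show Afun calA calB 0 (1/s) (-(1/s)) = 0
    apply IsGreatest.csSup_eq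
    constructor
    · refine ⟨2 - s, hmem, ?_⟩
      dsimp only; rw [inf_calB]
      have h0 : bfun 0 (2-s) 0 (1/s) (-(1/s)) = 0 := by
        rw [bfun0_eval, hu]; nlinarith [hs2]
      have h1 : bfun 0 (2-s) 1 (1/s) (-(1/s)) = 0 := by
        rw [bfun0_eval, hu]; nlinarith [hs2]
      rw [h0, h1]; norm_num
    · rintro x ⟨a, ha, rfl⟩
      dsimp only; rw [inf_calB]
      have ha' := hge a ha
      have h1 : bfun 0 a 1 (1/s) (-(1/s)) ≤ 0 := by
        rw [bfun0_eval, hu]; nlinarith [hs2, mul_nonneg (by linarith : (0:ℝ) ≤ a - (2-s)) (by linarith : (0:ℝ) ≤ 1 + s)]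
      exact le_trans (min_le_right _ _) h1
  · show Afun calA calB 1 (1/s) (-(1/s)) = 0
    apply IsGreatest.csSup_eq
    constructor
    · refine ⟨2 - s, hmem, ?_⟩
      dsimp only; rw [inf_calB]
      have h0 : bfun 1 (2-s) 0 (1/s) (-(1/s)) = 0 := by
        rw [bfun1_eval, hu]; nlinarith [hs2]
      have h1 : bfun 1 (2-s) 1 (1/s) (-(1/s)) = 0 := by
        rw [bfun1_eval, hu]; nlinarith [hs2]
      rw [h0, h1]; norm_num
    · rintro x ⟨a, ha, rfl⟩
      dsimp only; rw [inf_calB]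
      have ha' := hge a ha
      have h0 : bfun 1 a 0 (1/s) (-(1/s)) ≤ 0 := by
        rw [bfun1_eval, hu]; nlinarith [hs2, mul_nonneg (by linarith : (0:ℝ) ≤ a - (2-s)) (by linarith : (0:ℝ) ≤ 2 + s)]
      exact le_trans (min_le_left _ _) h0
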